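/- arXiv:0810.1176 — 3 statements merged into one kernel-verified Lean document; each statement's English description precedes it below -/
import Mathlib

section
/- Fix b ∈ F with b ≠ 0 and define f : F → F by f(a) = a b⁴ + a⁴ b. Then f is an additive homomorphism and its kernel is exactly the two-element set {0, b}. -/
/-- `F` is the field `GF(8)` with 8 elements (characteristic 2). -/
noncomputable abbrev F : Type := GaloisField 2 3

lemma F_char : CharP F 2 := inferInstance

lemma sq_add (x y : F) : (x + y) ^ 2 = x ^ 2 + y ^ 2 := by
  haveI := F_char
  exact add_pow_char x y 2

lemma pow4_add (x y : F) : (x + y) ^ 4 = x ^ 4 + y ^ 4 := by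
  have : (x + y) ^ 4 = ((x + y) ^ 2) ^ 2 := by ring
  rw [this, sq_add, sq_add]; ring

lemma pow7 (x : F) (hx : x ≠ 0) : x ^ 7 = 1 := by
  haveI : Fintype F := Fintype.ofFinite F
  have hcard : Fintype.card F = 8 := by
    have := GaloisField.card 2 3 (by norm_num)
    simpa using this
  have := FiniteField.pow_card_sub_one_eq_one x hx
  rw [hcard] at this
  simpa using this

/-- For a fixed `b ≠ 0` in `F`, the map `f : a ↦ a b⁴ + a⁴ b` is an additive
homomorphism with kernel exactly `{0, b}`. -/
theorem f_additive_with_kernel (b : F) (hb : b ≠ 0) :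
    (∀ a a' : F,
        (a + a') * b ^ 4 + (a + a') ^ 4 * b =
          (a * b ^ 4 + a ^ 4 * b) + (a' * b ^ 4 + a' ^ 4 * b)) ∧
      {a : F | a * b ^ 4 + a ^ 4 * b = 0} = {0, b} := by
  haveI := F_char
  constructor
  · intro a a'
    rw [pow4_add]
    ring
  · ext a
    simp only [Set.mem_setOf_eq, Set.mem_insert_iff, Set.mem_singleton_iff]
    constructor
    · intro h
      by_cases ha : a = 0
      · exact Or.inl ha
      · right
        have heq : a * b ^ 4 = a ^ 4 * b := by
          haveI := F_char
          have h2 : a * b ^ 4 = -(a ^ 4 * b) := eq_neg_of_add_eq_zero_left h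
          rw [CharTwo.neg_eq] at h2
          exact h2
        have hcube : a ^ 3 = b ^ 3 := by
          have h1 : a * b * (b ^ 3) = a * b * (a ^ 3) := by linear_combination heq
          have := mul_left_cancel₀ (mul_ne_zero ha hb) h1
          exact this.symm
        have hsq : a ^ 2 = b ^ 2 := by
          have h9 : a ^ 9 = b ^ 9 := by
            calc a ^ 9 = (a ^ 3) ^ 3 := by ring
            _ = (b ^ 3) ^ 3 := by rw [hcube]
            _ = b ^ 9 := by ring
          have ha7 := pow7 a ha
          have hb7 := pow7 b hb
          calc a ^ 2 = a ^ 7 * a ^ 2 := by rw [ha7]; ring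
          _ = a ^ 9 := by ring
          _ = b ^ 9 := h9
          _ = b ^ 7 * b ^ 2 := by ring
          _ = b ^ 2 := by rw [hb7]; ring
        have : (a + b) ^ 2 = 0 := by rw [sq_add, hsq]; exact CharTwo.add_self_eq_zero _
        have hab : a + b = 0 := by
          exact pow_eq_zero_iff (n := 2) (by norm_num) |>.mp this
        have : a = -b := eq_neg_of_add_eq_zero_left hab
        rwa [CharTwo.neg_eq] at this
    · rintro (rfl | rfl)
      · ring
      · have : a ^ 4 * a = a * a ^ 4 := by ring
        rw [this]
        exact CharTwo.add_self_eq_zero _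
end

section
/- Let b, c ∈ F with b ≠ 0. Then the equation a b⁴ + a⁴ b = b⁵ (c + c²) has exactly 2 solutions a ∈ F. -/
/-- For `b ≠ 0` and any `c` in `F`, the equation `a b⁴ + a⁴ b = b⁵ (c + c²)` has
exactly 2 solutions `a ∈ F`. -/
theorem two_solutions (b c : F) (hb : b ≠ 0) :
    Set.ncard {a : F | a * b ^ 4 + a ^ 4 * b = b ^ 5 * (c + c ^ 2)} = 2 := by
  have two : (2 : F) = 0 := by
    have := CharP.cast_eq_zero F 2
    exact_mod_cast this
  haveI : Fintype F := Fintype.ofFinite F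
  have h8 : ∀ x : F, x ^ 8 = x := by
    intro x
    have h := FiniteField.pow_card x
    rwa [Fintype.card_eq_nat_card, GaloisField.card 2 3 (by norm_num)] at h
  have hc16 : c ^ 16 = c ^ 2 := by
    calc c ^ 16 = (c ^ 8) ^ 2 := by ring
    _ = c ^ 2 := by rw [h8 c]
  have hb7 : b ^ 7 = 1 := by
    have h := h8 b
    have h' : b ^ 7 * b = 1 * b := by rw [one_mul]; linear_combination h
    exact mul_right_cancel₀ hb h'
  set p : F := b * (c + c ^ 4) with hp
  have hne : p ≠ p + b := fun h => hb (left_eq_add.mp h)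
  have hset : {a : F | a * b ^ 4 + a ^ 4 * b = b ^ 5 * (c + c ^ 2)} = {p, p + b} := by
    ext a
    simp only [Set.mem_setOf_eq, Set.mem_insert_iff, Set.mem_singleton_iff]
    constructor
    · intro h
      -- let d = a + p; then d*b^4 + d^4*b = 0
      set d : F := a + p with hd
      have hkey : d * b ^ 4 + d ^ 4 * b = 0 := by
        rw [hd, hp]
        linear_combination h + b ^ 5 * hc16 +
          (b^5*c + b^5*c^2 + b^5*c^4 + 2*b^5*c^7 + 3*b^5*c^10 + 2*b^5*c^13
            + 2*a*b^4*c^3 + 6*a*b^4*c^6 + 6*a*b^4*c^9 + 2*a*b^4*c^12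
            + 3*a^2*b^3*c^2 + 6*a^2*b^3*c^5 + 3*a^2*b^3*c^8
            + 2*a^3*b^2*c + 2*a^3*b^2*c^4) * two
      by_cases hd0 : d = 0
      · left
        have : a + p = 0 := hd ▸ hd0
        linear_combination this - p * two
      · right
        -- from hkey: d^4 * b = d * b^4, so d^3 = b^3, then d = b
        have hd3 : d ^ 3 = b ^ 3 := by
          have h1 : d * b * (d ^ 3 - b ^ 3) = 0 := by linear_combination hkey - d * b ^ 4 * two
          rcases mul_eq_zero.mp h1 with h2 | h2
          · rcases mul_eq_zero.mp h2 with h3 | h3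
            · exact absurd h3 hd0
            · exact absurd h3 hb
          · exact sub_eq_zero.mp h2
        have hd7 : d ^ 7 = 1 := by
          have h := h8 d
          have h' : d ^ 7 * d = 1 * d := by rw [one_mul]; linear_combination h
          exact mul_right_cancel₀ hd0 h'
        have hdb : d * b ^ 6 = b * b ^ 6 := by
          calc d * b ^ 6 = d * (d ^ 3) ^ 2 := by rw [hd3]; ring
          _ = d ^ 7 := by ring
          _ = 1 := hd7
          _ = b ^ 7 := hb7.symm
          _ = b * b ^ 6 := by ring
        have hdeqb : d = b := mul_right_cancel₀ (pow_ne_zero 6 hb) hdb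
        have : a + p = b := hd ▸ hdeqb
        linear_combination this - p * two
    · rintro (h | h) <;> rw [h, hp]
      · linear_combination b ^ 5 * hc16 +
          (b^5*c^4 + 2*b^5*c^7 + 3*b^5*c^10 + 2*b^5*c^13) * two
      · linear_combination b ^ 5 * hc16 +
          (b^5 + 2*b^5*c + 3*b^5*c^2 + 2*b^5*c^3 + 3*b^5*c^4 + 6*b^5*c^5 + 6*b^5*c^6
            + 2*b^5*c^7 + 3*b^5*c^8 + 6*b^5*c^9 + 3*b^5*c^10 + 2*b^5*c^12 + 2*b^5*c^13) * two
  rw [hset, Set.ncard_pair hne]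
end

section
/- Let b ∈ F with b ≠ 0. The image of the map f : F → F, f(a) = a b⁴ + a⁴ b, is exactly the set b⁵ · ker Tr = {b⁵ k : k ∈ F, Tr(k) = 0}. -/
/-- The trace map `Tr : F → F`, `Tr α = α + α² + α⁴`. -/
noncomputable def Tr (α : F) : F := α + α ^ 2 + α ^ 4

instance : Fact (Nat.Prime 2) := ⟨Nat.prime_two⟩

lemma F_pow8 (x : F) : x ^ 8 = x := by
  have h : x ^ (Nat.card F) = x := by
    haveI : Fintype F := Fintype.ofFinite F
    rw [Nat.card_eq_fintype_card]
    exact FiniteField.pow_card x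
  rwa [GaloisField.card 2 3 (by norm_num)] at h

lemma F_two : (2 : F) = 0 := by
  exact_mod_cast CharP.cast_eq_zero F 2

/-- For `b ≠ 0` in `F`, the image of `f : a ↦ a b⁴ + a⁴ b` is exactly
`b⁵ · ker Tr`. -/
theorem range_f_eq (b : F) (hb : b ≠ 0) :
    Set.range (fun a : F => a * b ^ 4 + a ^ 4 * b) =
      {x : F | ∃ k : F, Tr k = 0 ∧ x = b ^ 5 * k} := by
  ext x
  simp only [Set.mem_range, Set.mem_setOf_eq]
  constructor
  · rintro ⟨a, rfl⟩
    refine ⟨a / b + (a / b) ^ 4, ?_, ?_⟩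
    · set t : F := a / b with ht
      have h8 : t ^ 8 = t := F_pow8 t
      have h2 : (2 : F) = 0 := F_two
      show (t + t ^ 4) + (t + t ^ 4) ^ 2 + (t + t ^ 4) ^ 4 = 0
      linear_combination (t ^ 8 + t + 6 * t ^ 2 + 4 * t ^ 5 + 1) * h8 +
        (t + t ^ 2 + 3 * t ^ 3 + t ^ 4 + t ^ 5 + 2 * t ^ 6 + 2 * t ^ 7) * h2
    · field_simp
  · rintro ⟨k, hk, rfl⟩
    refine ⟨b * (k + k ^ 2), ?_⟩
    have h8 : k ^ 8 = k := F_pow8 k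
    have h2 : (2 : F) = 0 := F_two
    have hk' : k + k ^ 2 + k ^ 4 = 0 := hk
    linear_combination b ^ 5 * hk' + b ^ 5 * h8 +
      (2 * k ^ 5 + 3 * k ^ 6 + 2 * k ^ 7) * b ^ 5 * h2
end
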